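/- arXiv:1102.1493 — 2 statements merged into one kernel-verified Lean document; each statement's English description precedes it below -/
import Mathlib

section
/- Let λ ∈ ℂ with λ ≠ 0 and λ ≠ 1, and let n ≥ 2 be an integer. Then for every x ∈ [0,1], the series ∑_{k∈ℤ} e^{2πikx}/(2πik − log λ)^n converges absolutely and 𝓑_n(x;λ) = −(n!/λ^x) · ∑_{k∈ℤ} e^{2πikx}/(2πik − log λ)^n. -/
noncomputable def ABnum (lam : ℂ) : ℕ → ℂ
  | 0 => 0
  | n + 1 =>
    ((if n = 0 then 1 else 0) -
        lam * ∑ k ∈ (Finset.range (n + 1)).attach,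
          (((n + 1).choose k.1 : ℕ) : ℂ) * ABnum lam k.1) / (lam - 1)
decreasing_by exact Finset.mem_range.mp k.2

/-- The Apostol–Bernoulli polynomial `𝓑_n(x;λ)`. -/
noncomputable def ABpoly (lam : ℂ) (n : ℕ) (x : ℂ) : ℂ :=
  ∑ k ∈ Finset.range (n + 1), ((n.choose k : ℕ) : ℂ) * ABnum lam k * x ^ (n - k)

open Complex MeasureTheory Set intervalIntegral Real Filter

local notation "𝕌" => UnitAddCircle

lemma ABnum_zero (lam : ℂ) : ABnum lam 0 = 0 := by rw [ABnum]

lemma ABnum_succ (lam : ℂ) (n : ℕ) :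
    ABnum lam (n + 1) = ((if n = 0 then 1 else 0) -
      lam * ∑ k ∈ Finset.range (n + 1), (((n + 1).choose k : ℕ) : ℂ) * ABnum lam k) /
      (lam - 1) := by
  rw [ABnum, ← Finset.sum_attach (Finset.range (n + 1))
    (fun k => (((n + 1).choose k : ℕ) : ℂ) * ABnum lam k)]

lemma ABpoly_zero (lam : ℂ) (x : ℂ) : ABpoly lam 0 x = 0 := by
  simp [ABpoly, ABnum_zero]

lemma ABpoly_eval_zero (lam : ℂ) (n : ℕ) : ABpoly lam n 0 = ABnum lam n := by
  rw [ABpoly, Finset.sum_eq_single n]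
  · simp
  · intro k hk hkn
    have : n - k ≠ 0 := by
      have := Finset.mem_range.mp hk; omega
    simp [zero_pow this]
  · intro h; exact absurd (Finset.self_mem_range_succ n) h

lemma ABpoly_eval_one (lam : ℂ) (hlam1 : lam ≠ 1) (n : ℕ) :
    lam * ABpoly lam n 1 = ABnum lam n + (if n = 1 then 1 else 0) := by
  cases n with
  | zero => simp [ABpoly, ABnum_zero]
  | succ m =>
    have hne : lam - 1 ≠ 0 := sub_ne_zero.mpr hlam1
    have h2 : (lam - 1) * ABnum lam (m + 1) = (if m = 0 then 1 else 0) -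
        lam * ∑ k ∈ Finset.range (m + 1), (((m + 1).choose k : ℕ) : ℂ) * ABnum lam k := by
      rw [ABnum_succ]; field_simp
    have hif : (if m + 1 = 1 then (1:ℂ) else 0) = (if m = 0 then 1 else 0) := by
      simp
    simp only [ABpoly, one_pow, mul_one]
    rw [Finset.sum_range_succ, hif]
    simp only [Nat.choose_self, Nat.cast_one, one_mul]
    linear_combination h2

lemma hasDerivAt_ABpoly (lam : ℂ) (n : ℕ) (x : ℂ) :
    HasDerivAt (fun y : ℂ => ABpoly lam (n + 1) y) (((n : ℂ) + 1) * ABpoly lam n x) x := by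
  have h : HasDerivAt (fun y : ℂ => ∑ k ∈ Finset.range (n + 2),
        (((n + 1).choose k : ℕ) : ℂ) * ABnum lam k * y ^ (n + 1 - k))
      (∑ k ∈ Finset.range (n + 2),
        (((n + 1).choose k : ℕ) : ℂ) * ABnum lam k * ((n + 1 - k : ℕ) * x ^ (n + 1 - k - 1))) x :=
    HasDerivAt.fun_sum fun k _ => (hasDerivAt_pow (n + 1 - k) x).const_mul _
  convert h using 1
  · rfl
  rw [Finset.sum_range_succ]
  simp only [Nat.sub_self, Nat.cast_zero, zero_mul, mul_zero, add_zero]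
  rw [ABpoly, Finset.mul_sum]
  refine Finset.sum_congr rfl fun k hk => ?_
  have hkn : k ≤ n := Nat.lt_succ_iff.mp (Finset.mem_range.mp hk)
  have e1 : n + 1 - k - 1 = n - k := by omega
  have e2 : ((n + 1) * n.choose k : ℕ) = ((n + 1).choose k * (n + 1 - k) : ℕ) :=
    (Nat.add_one_mul_choose_eq n k).trans (Nat.choose_succ_right_eq (n + 1) k)
  have e2' : ((n:ℂ) + 1) * (n.choose k : ℕ) = (((n + 1).choose k : ℕ) : ℂ) * ((n + 1 - k : ℕ) : ℂ) := by
    exact_mod_cast congrArg (Nat.cast : ℕ → ℂ) e2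
  rw [e1]
  calc ((n:ℂ) + 1) * ((n.choose k : ℕ) * ABnum lam k * x ^ (n - k))
      = (((n:ℂ) + 1) * (n.choose k : ℕ)) * ABnum lam k * x ^ (n - k) := by ring
    _ = _ := by rw [e2']; ring

lemma continuous_ABpoly (lam : ℂ) (n : ℕ) : Continuous (fun x : ℝ => ABpoly lam n (x : ℂ)) := by
  unfold ABpoly
  exact continuous_finset_sum _ (fun k _ => by fun_prop)

lemma log_ne (lam : ℂ) (hlam0 : lam ≠ 0) (hlam1 : lam ≠ 1) (k : ℤ) :
    2 * (π : ℂ) * I * k - Complex.log lam ≠ 0 := by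
  intro h
  have h' : Complex.log lam = 2 * (π : ℂ) * I * k := by linear_combination -h
  rcases eq_or_ne k 0 with rfl | hk
  · simp at h'
    exact hlam1 (by rw [← Complex.exp_log hlam0, h', Complex.exp_zero])
  · have him : (Complex.log lam).im = 2 * π * k := by
      rw [h']
      simp [Complex.mul_im, Complex.mul_re]
    have h1 : (Complex.log lam).im ≤ π := Complex.log_im_le_pi lam
    have h2 : -π < (Complex.log lam).im := Complex.neg_pi_lt_log_im lam
    have hπ : 0 < π := Real.pi_pos
    rcases lt_or_ge (k:ℝ) 0 with hk' | hk'
    · have : (k:ℝ) ≤ -1 := by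
        have hk1 : k < 0 := by exact_mod_cast hk'
        have : k ≤ -1 := by omega
        exact_mod_cast this
      nlinarith [him]
    · have : (1:ℝ) ≤ (k:ℝ) := by
        have hk0 : 0 < k := by exact_mod_cast lt_of_le_of_ne (by exact_mod_cast hk') (Ne.symm hk)
        exact_mod_cast hk0
      nlinarith [him]

/-- The twisted integral `∫₀¹ e^{μx} 𝓑_n(x;λ) dx` with `μ = log λ − 2πik`. -/
noncomputable def Jint (lam : ℂ) (k : ℤ) (n : ℕ) : ℂ :=
  ∫ x in (0:ℝ)..1, Complex.exp ((Complex.log lam - 2 * π * I * k) * x) * ABpoly lam n x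

lemma continuous_integrand (lam c : ℂ) (n : ℕ) :
    Continuous (fun x : ℝ => Complex.exp (c * x) * ABpoly lam n (x : ℂ)) :=
  (by fun_prop : Continuous fun x : ℝ => Complex.exp (c * x)).mul (continuous_ABpoly lam n)

lemma Jint_zero (lam : ℂ) (k : ℤ) : Jint lam k 0 = 0 := by
  simp [Jint, ABpoly_zero]

lemma Jint_rec (lam : ℂ) (hlam0 : lam ≠ 0) (hlam1 : lam ≠ 1) (k : ℤ) (n : ℕ) :
    (Complex.log lam - 2 * π * I * k) * Jint lam k (n + 1) + ((n : ℂ) + 1) * Jint lam k n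
      = (if n = 0 then 1 else 0) := by
  set μ : ℂ := Complex.log lam - 2 * π * I * k with hμ
  have hF : ∀ x : ℝ, HasDerivAt (fun y : ℝ => Complex.exp (μ * y) * ABpoly lam (n + 1) y)
      (μ * (Complex.exp (μ * x) * ABpoly lam (n + 1) x) +
        ((n : ℂ) + 1) * (Complex.exp (μ * x) * ABpoly lam n x)) x := by
    intro x
    have hexp : HasDerivAt (fun y : ℝ => Complex.exp (μ * y)) (μ * Complex.exp (μ * x)) x := by
      have h1 := (((hasDerivAt_id (x : ℂ)).const_mul μ).cexp).comp_ofReal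
      simpa [mul_comm] using h1
    have hpoly : HasDerivAt (fun y : ℝ => ABpoly lam (n + 1) (y : ℂ))
        (((n : ℂ) + 1) * ABpoly lam n x) x := (hasDerivAt_ABpoly lam n (x : ℂ)).comp_ofReal
    have := hexp.fun_mul hpoly
    convert this using 1
    · rfl
    ring
  have hcont : Continuous (fun x : ℝ => μ * (Complex.exp (μ * x) * ABpoly lam (n + 1) x) +
      ((n : ℂ) + 1) * (Complex.exp (μ * x) * ABpoly lam n x)) :=
    (continuous_const.mul (continuous_integrand lam μ (n + 1))).add
      (continuous_const.mul (continuous_integrand lam μ n))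
  have hint := intervalIntegral.integral_eq_sub_of_hasDerivAt (fun x _ => hF x)
    (hcont.intervalIntegrable 0 1)
  have hsplit : (∫ x in (0:ℝ)..1, (μ * (Complex.exp (μ * x) * ABpoly lam (n + 1) x) +
      ((n : ℂ) + 1) * (Complex.exp (μ * x) * ABpoly lam n x)))
      = μ * Jint lam k (n + 1) + ((n : ℂ) + 1) * Jint lam k n := by
    rw [intervalIntegral.integral_add
      (((continuous_const.fun_mul (continuous_integrand lam μ (n + 1)))).intervalIntegrable 0 1)
      (((continuous_const.fun_mul (continuous_integrand lam μ n))).intervalIntegrable 0 1),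
      intervalIntegral.integral_const_mul, intervalIntegral.integral_const_mul]
    rfl
  rw [hsplit] at hint
  have hμ1 : Complex.exp (μ * 1) = lam := by
    rw [mul_one, hμ, sub_eq_add_neg, Complex.exp_add, Complex.exp_log hlam0]
    have h1 : Complex.exp (-(2 * (π:ℂ) * I * k)) = 1 := by
      have h2 := Complex.exp_int_mul_two_pi_mul_I (-k)
      rw [← h2]; congr 1; push_cast; ring
    rw [h1, mul_one]
  rw [hint]
  push_cast
  rw [hμ1, mul_zero, Complex.exp_zero, one_mul, ABpoly_eval_zero,
    ABpoly_eval_one lam hlam1 (n + 1)]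
  have : (if n + 1 = 1 then (1:ℂ) else 0) = (if n = 0 then 1 else 0) := by simp
  rw [this]; ring

lemma Jint_eq (lam : ℂ) (hlam0 : lam ≠ 0) (hlam1 : lam ≠ 1) (k : ℤ) (n : ℕ) (hn : 1 ≤ n) :
    Jint lam k n = -(n.factorial : ℂ) / (2 * π * I * k - Complex.log lam) ^ n := by
  set ν : ℂ := 2 * π * I * k - Complex.log lam with hν
  have hν0 : ν ≠ 0 := log_ne lam hlam0 hlam1 k
  have hμ : Complex.log lam - 2 * π * I * k = -ν := by rw [hν]; ring
  clear_value ν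
  induction n, hn using Nat.le_induction with
  | base =>
    have h := Jint_rec lam hlam0 hlam1 k 0
    rw [if_pos rfl, Jint_zero] at h
    rw [hμ] at h
    field_simp
    linear_combination -h
  | succ n hn ih =>
    have h := Jint_rec lam hlam0 hlam1 k n
    rw [if_neg (by omega), ih] at h
    rw [hμ] at h
    have hfac : (((n + 1).factorial : ℕ) : ℂ) = ((n : ℂ) + 1) * (n.factorial : ℂ) := by
      push_cast [Nat.factorial_succ]; ring
    rw [pow_succ, hfac]
    field_simp at h
    rw [eq_div_iff (mul_ne_zero (pow_ne_zero _ hν0) hν0)]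
    linear_combination -h

lemma norm_two_pi_I_int (k : ℤ) : ‖(2 * (π:ℂ) * I * k)‖ = 2 * π * |(k:ℝ)| := by
  simp [abs_of_pos Real.pi_pos]

lemma summable_core (lam : ℂ) (hlam0 : lam ≠ 0) (hlam1 : lam ≠ 1) {n : ℕ} (hn : 2 ≤ n) :
    Summable (fun k : ℤ => 1 / ‖(2 * (π:ℂ) * I * k - Complex.log lam) ^ n‖) := by
  set C := ‖Complex.log lam‖ with hC
  have hπ : (0:ℝ) < π := Real.pi_pos
  have habs : Summable (fun k : ℤ => |1 / (k:ℝ) ^ n|) := by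
    rw [summable_abs_iff, Real.summable_one_div_int_pow]
    omega
  apply Summable.of_norm_bounded_eventually (g := fun k : ℤ => (π ^ n)⁻¹ * |1 / (k:ℝ) ^ n|)
    (habs.mul_left _)
  have hbound : ∀ k : ℤ, C ≤ π * |(k:ℝ)| → k ≠ 0 →
      ‖1 / ‖(2 * (π:ℂ) * I * k - Complex.log lam) ^ n‖‖ ≤ (π ^ n)⁻¹ * |1 / (k:ℝ) ^ n| := by
    intro k hk hk0
    have hklb : (1:ℝ) ≤ |(k:ℝ)| := by
      rw [← Int.cast_abs]
      exact_mod_cast Int.one_le_abs hk0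
    have h1 : π * |(k:ℝ)| ≤ ‖2 * (π:ℂ) * I * k - Complex.log lam‖ := by
      have := norm_sub_norm_le (2 * (π:ℂ) * I * k) (Complex.log lam)
      rw [norm_two_pi_I_int] at this
      nlinarith
    have hpos : (0:ℝ) < π * |(k:ℝ)| := by positivity
    rw [norm_pow, Real.norm_of_nonneg (by positivity)]
    rw [abs_div, abs_one, _root_.abs_pow]
    have h2 : ((π * |(k:ℝ)|) ^ n) ≤ ‖2 * (π:ℂ) * I * k - Complex.log lam‖ ^ n :=
      pow_le_pow_left₀ hpos.le h1 n
    calc 1 / ‖2 * (π:ℂ) * I * k - Complex.log lam‖ ^ n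
        ≤ 1 / ((π * |(k:ℝ)|) ^ n) := one_div_le_one_div_of_le (by positivity) h2
      _ = (π ^ n)⁻¹ * (1 / |(k:ℝ)| ^ n) := by rw [mul_pow]; field_simp
  rw [Int.cofinite_eq, eventually_sup]
  constructor
  · rw [eventually_atBot]
    refine ⟨-(⌈C / π⌉ + 1), fun k hk => ?_⟩
    have h0 : (0:ℤ) ≤ ⌈C / π⌉ := Int.ceil_nonneg (by positivity)
    have hk0 : k ≠ 0 := by omega
    apply hbound k _ hk0
    have : (⌈C / π⌉ : ℝ) + 1 ≤ |(k:ℝ)| := by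
      rw [← Int.cast_abs]
      have : ⌈C / π⌉ + 1 ≤ |k| := by rw [abs_of_nonpos (by omega)]; omega
      exact_mod_cast this
    have h2 : C / π ≤ ⌈C / π⌉ := Int.le_ceil _
    calc C = (C / π) * π := by field_simp
      _ ≤ |(k:ℝ)| * π := by nlinarith
      _ = π * |(k:ℝ)| := by ring
  · rw [eventually_atTop]
    refine ⟨⌈C / π⌉ + 1, fun k hk => ?_⟩
    have h0 : (0:ℤ) ≤ ⌈C / π⌉ := Int.ceil_nonneg (by positivity)
    have hk0 : k ≠ 0 := by omega
    apply hbound k _ hk0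
    have : (⌈C / π⌉ : ℝ) + 1 ≤ |(k:ℝ)| := by
      rw [← Int.cast_abs]
      have : ⌈C / π⌉ + 1 ≤ |k| := by rw [_root_.abs_of_nonneg (by omega)]; omega
      exact_mod_cast this
    have h2 : C / π ≤ ⌈C / π⌉ := Int.le_ceil _
    calc C = (C / π) * π := by field_simp
      _ ≤ |(k:ℝ)| * π := by nlinarith
      _ = π * |(k:ℝ)| := by ring

lemma continuous_f (lam : ℂ) (n : ℕ) :
    Continuous (fun x : ℝ => Complex.exp (x * Complex.log lam) * ABpoly lam n x) :=
  (by fun_prop : Continuous fun x : ℝ => Complex.exp (x * Complex.log lam)).mul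
    (continuous_ABpoly lam n)

lemma fourierCoeffOn_f (lam : ℂ) (n : ℕ) (k : ℤ) :
    fourierCoeffOn (zero_lt_one' ℝ)
      (fun x : ℝ => Complex.exp (x * Complex.log lam) * ABpoly lam n x) k = Jint lam k n := by
  rw [fourierCoeffOn_eq_integral]
  simp only [sub_zero, one_div, inv_one, one_smul, Jint]
  apply intervalIntegral.integral_congr
  intro x _
  beta_reduce
  rw [fourier_coe_apply]
  simp only [smul_eq_mul]
  rw [← mul_assoc, ← Complex.exp_add]
  congr 1
  push_cast
  field_simp
  ring

lemma key_hasSum (lam : ℂ) (hlam0 : lam ≠ 0) (hlam1 : lam ≠ 1) {n : ℕ} (hn : 2 ≤ n)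
    {x : ℝ} (hx : x ∈ Set.Icc (0:ℝ) 1) :
    HasSum (fun k : ℤ => -(n.factorial : ℂ) / (2 * π * I * k - Complex.log lam) ^ n *
        Complex.exp (2 * π * I * k * x))
      (Complex.exp (x * Complex.log lam) * ABpoly lam n x) := by
  have hendpoint : (fun x : ℝ => Complex.exp (x * Complex.log lam) * ABpoly lam n x) 0
      = (fun x : ℝ => Complex.exp (x * Complex.log lam) * ABpoly lam n x) 1 := by
    simp only [Complex.ofReal_zero, Complex.ofReal_one, zero_mul, one_mul, Complex.exp_zero]
    rw [Complex.exp_log hlam0, ABpoly_eval_zero, ABpoly_eval_one lam hlam1 n,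
      if_neg (by omega), add_zero]
  suffices h : ∀ {y : ℝ}, y ∈ Ico (0:ℝ) 1 →
      HasSum (fun k : ℤ => -(n.factorial : ℂ) / (2 * π * I * k - Complex.log lam) ^ n *
        Complex.exp (2 * π * I * k * y))
      (Complex.exp (y * Complex.log lam) * ABpoly lam n y) by
    rw [← Ico_insert_right (zero_le_one' ℝ), mem_insert_iff, or_comm] at hx
    rcases hx with hx | rfl
    · exact h hx
    · have h0 := h (left_mem_Ico.mpr zero_lt_one)
      have e0 : Complex.exp (((0:ℝ):ℂ) * Complex.log lam) * ABpoly lam n ((0:ℝ):ℂ) =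
          Complex.exp (((1:ℝ):ℂ) * Complex.log lam) * ABpoly lam n ((1:ℝ):ℂ) := hendpoint
      have hfun : (fun k : ℤ => -(n.factorial : ℂ) / (2 * π * I * k - Complex.log lam) ^ n *
            Complex.exp (2 * π * I * k * ((0:ℝ):ℂ)))
          = (fun k : ℤ => -(n.factorial : ℂ) / (2 * π * I * k - Complex.log lam) ^ n *
            Complex.exp (2 * π * I * k * ((1:ℝ):ℂ))) := by
        funext k
        congr 1
        rw [Complex.ofReal_zero, Complex.ofReal_one, mul_zero, mul_one,
          show (2 * (π:ℂ) * I * k) = k * (2 * π * I) by ring,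
          Complex.exp_int_mul_two_pi_mul_I, Complex.exp_zero]
      rw [← hfun, ← e0]
      exact h0
  intro y hy
  set f : ℝ → ℂ := fun x : ℝ => Complex.exp (x * Complex.log lam) * ABpoly lam n x with hf
  set G : C(𝕌, ℂ) := ContinuousMap.mk (AddCircle.liftIco 1 0 f)
    (AddCircle.liftIco_zero_continuous hendpoint (continuous_f lam n).continuousOn) with hG
  have step1 : ∀ k : ℤ, fourierCoeff (⇑G) k
      = -(n.factorial : ℂ) / (2 * π * I * k - Complex.log lam) ^ n := by
    intro k
    rw [hG, ContinuousMap.coe_mk, fourierCoeff_liftIco_eq]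
    have := (fourierCoeffOn_f lam n k).trans (Jint_eq lam hlam0 hlam1 k n (by omega))
    simpa only [zero_add] using this
  have hsum : Summable (fourierCoeff (⇑G)) := by
    apply Summable.of_norm
    apply Summable.congr (((summable_core lam hlam0 hlam1 hn).mul_left
      ((n.factorial : ℝ)))) ?_
    intro k
    rw [step1, norm_div, norm_neg, Complex.norm_natCast]
    rw [mul_one_div]
  have step2 := has_pointwise_sum_fourier_series_of_summable hsum (y : 𝕌)
  simp_rw [step1] at step2
  have hGy : G (y : 𝕌) = f y := by
    rw [hG, ContinuousMap.coe_mk]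
    exact AddCircle.liftIco_coe_apply (by rwa [zero_add])
  rw [hGy] at step2
  convert step2 using 2 with k
  rw [smul_eq_mul]
  congr 1
  rw [fourier_coe_apply]
  norm_num

theorem apostol_bernoulli_fourier_series (lam : ℂ) (hlam0 : lam ≠ 0) (hlam1 : lam ≠ 1)
    (n : ℕ) (hn : 2 ≤ n) (x : ℝ) (hx : x ∈ Set.Icc (0:ℝ) 1) :
    Summable (fun k : ℤ => ‖Complex.exp (2 * Real.pi * Complex.I * k * x) /
        (2 * Real.pi * Complex.I * k - Complex.log lam) ^ n‖) ∧
    ABpoly lam n x = -((n.factorial : ℂ) / Complex.exp (x * Complex.log lam)) *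
        ∑' k : ℤ, Complex.exp (2 * Real.pi * Complex.I * k * x) /
          (2 * Real.pi * Complex.I * k - Complex.log lam) ^ n := by
  have hnorm1 : ∀ k : ℤ, ‖Complex.exp (2 * (π:ℂ) * I * k * x)‖ = 1 := by
    intro k
    rw [show (2 * (π:ℂ) * I * k * x) = ((2 * π * k * x : ℝ) : ℂ) * I by push_cast; ring]
    exact Complex.norm_exp_ofReal_mul_I _
  have hsumnorm : Summable (fun k : ℤ => ‖Complex.exp (2 * (π:ℂ) * I * k * x) /
      (2 * (π:ℂ) * I * k - Complex.log lam) ^ n‖) := by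
    apply Summable.congr (summable_core lam hlam0 hlam1 hn)
    intro k
    rw [norm_div, hnorm1 k]
  refine ⟨hsumnorm, ?_⟩
  have key := key_hasSum lam hlam0 hlam1 hn hx
  have hfun : (fun k : ℤ => -(n.factorial : ℂ) / (2 * π * I * k - Complex.log lam) ^ n *
        Complex.exp (2 * π * I * k * x))
      = (fun k : ℤ => (-(n.factorial : ℂ)) * (Complex.exp (2 * π * I * k * x) /
        (2 * π * I * k - Complex.log lam) ^ n)) := by
    funext k; ring
  rw [hfun] at key
  have htsum := key.tsum_eq
  rw [tsum_mul_left] at htsum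
  have hexp : Complex.exp ((x:ℂ) * Complex.log lam) ≠ 0 := Complex.exp_ne_zero _
  have hfac : ((n.factorial : ℕ) : ℂ) ≠ 0 := Nat.cast_ne_zero.mpr n.factorial_ne_zero
  have hAB : ABpoly lam n x = -((n.factorial : ℂ) / Complex.exp ((x:ℂ) * Complex.log lam)) *
      ∑' k : ℤ, Complex.exp (2 * (π:ℂ) * I * k * x) /
        (2 * (π:ℂ) * I * k - Complex.log lam) ^ n := by
    have h2 : ∑' k : ℤ, Complex.exp (2 * (π:ℂ) * I * k * x) /
        (2 * (π:ℂ) * I * k - Complex.log lam) ^ n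
        = (Complex.exp ((x:ℂ) * Complex.log lam) * ABpoly lam n x) / (-(n.factorial : ℂ)) := by
      rw [eq_div_iff (neg_ne_zero.mpr hfac), mul_comm]
      exact htsum
    rw [h2]
    field_simp
  exact hAB
end

section
/- Let λ ∈ ℂ with λ ≠ 1 and λ ≠ −1. Then for every integer n ≥ 0 and every x ∈ ℂ, 2^n·𝓑_n(x/2; λ²) = 𝓑_n(x;λ) + 𝓑_n(x;−λ). -/
open PowerSeries

noncomputable def Bser (lam : ℂ) : ℂ⟦X⟧ := PowerSeries.mk fun n => ABnum lam n / n.factorial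

lemma ABnum_rec (lam : ℂ) (hlam : lam ≠ 1) (n : ℕ) :
    lam * ∑ k ∈ Finset.range (n + 1), ((n.choose k : ℕ) : ℂ) * ABnum lam k - ABnum lam n
      = if n = 1 then 1 else 0 := by
  cases n with
  | zero => simp [ABnum]
  | succ m =>
    have hrec : (lam - 1) * ABnum lam (m + 1) =
        (if m = 0 then 1 else 0) -
          lam * ∑ k ∈ Finset.range (m + 1), (((m + 1).choose k : ℕ) : ℂ) * ABnum lam k := by
      rw [ABnum]
      rw [Finset.sum_attach (Finset.range (m + 1))
        (fun k => (((m + 1).choose k : ℕ) : ℂ) * ABnum lam k)]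
      field_simp [sub_ne_zero.mpr hlam]
    rw [Finset.sum_range_succ]
    have : ((m + 1).choose (m + 1) : ℂ) = 1 := by simp
    rw [this]
    have hm : (if m + 1 = 1 then (1:ℂ) else 0) = if m = 0 then 1 else 0 := by
      simp [Nat.succ_eq_add_one]
    rw [hm]
    linear_combination hrec

lemma key (lam : ℂ) (hlam : lam ≠ 1) :
    (PowerSeries.C (R := ℂ) lam * PowerSeries.exp ℂ - 1) * Bser lam = PowerSeries.X := by
  ext n
  rw [sub_mul, one_mul, map_sub, mul_assoc, PowerSeries.coeff_C_mul]
  have hEB : (PowerSeries.coeff (R := ℂ) n) (PowerSeries.exp ℂ * Bser lam) =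
      (∑ k ∈ Finset.range (n + 1), ((n.choose k : ℕ) : ℂ) * ABnum lam k) / n.factorial := by
    rw [mul_comm, PowerSeries.coeff_mul, Finset.Nat.sum_antidiagonal_eq_sum_range_succ_mk,
      Finset.sum_div]
    refine Finset.sum_congr rfl fun k hk => ?_
    have hk' : k ≤ n := Nat.lt_succ_iff.mp (Finset.mem_range.mp hk)
    rw [Bser, PowerSeries.coeff_mk, PowerSeries.coeff_exp]
    have hfac : ((k.factorial : ℂ)) * ((n - k).factorial : ℂ) * (n.choose k : ℂ)
        = (n.factorial : ℂ) := by
      rw [← Nat.cast_mul, ← Nat.cast_mul, ← Nat.choose_mul_factorial_mul_factorial hk']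
      push_cast; ring
    have h1 : (k.factorial : ℂ) ≠ 0 := Nat.cast_ne_zero.mpr k.factorial_ne_zero
    have h2 : ((n - k).factorial : ℂ) ≠ 0 := Nat.cast_ne_zero.mpr (n - k).factorial_ne_zero
    have h3 : (n.factorial : ℂ) ≠ 0 := Nat.cast_ne_zero.mpr n.factorial_ne_zero
    rw [eq_div_iff h3, ← hfac]
    simp only [one_div, map_inv₀, map_natCast]
    field_simp
  rw [hEB, Bser, PowerSeries.coeff_mk, PowerSeries.coeff_X]
  have h3 : (n.factorial : ℂ) ≠ 0 := Nat.cast_ne_zero.mpr n.factorial_ne_zero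
  rw [mul_div_assoc', div_sub_div_same, ABnum_rec lam hlam n]
  by_cases h : n = 1 <;> simp [h, Nat.factorial]

lemma series_dup (lam : ℂ) (hlam1 : lam ≠ 1) (hlam2 : lam ≠ -1) :
    PowerSeries.rescale 2 (Bser (lam ^ 2)) = Bser lam + Bser (-lam) := by
  set E := PowerSeries.exp ℂ
  have hE2 : PowerSeries.rescale (2:ℂ) E = E * E := by
    have := PowerSeries.exp_mul_exp_eq_exp_add (1:ℂ) 1
    rw [PowerSeries.rescale_one] at this
    rw [show ((2:ℂ)) = 1 + 1 by norm_num, ← this]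
    rfl
  have hsq : lam ^ 2 ≠ 1 := by
    intro h
    have h0 : (lam - 1) * (lam + 1) = 0 := by linear_combination h
    rcases mul_eq_zero.mp h0 with h1 | h1
    · exact hlam1 (by linear_combination h1)
    · exact hlam2 (by linear_combination h1)
  have hkey2 := key (lam ^ 2) hsq
  have hG : (PowerSeries.C (R := ℂ) (lam ^ 2) * (E * E) - 1) * PowerSeries.rescale 2 (Bser (lam ^ 2))
      = PowerSeries.C (R := ℂ) 2 * PowerSeries.X := by
    have hC : PowerSeries.rescale (2:ℂ) (PowerSeries.C (R := ℂ) (lam ^ 2))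
        = PowerSeries.C (R := ℂ) (lam ^ 2) := by
      ext m
      simp only [PowerSeries.coeff_rescale, PowerSeries.coeff_C]
      rcases m with _ | m <;> simp
    have := congrArg (PowerSeries.rescale (2:ℂ)) hkey2
    rw [map_mul, map_sub, map_mul, map_one, hC, hE2, PowerSeries.rescale_X] at this
    exact this
  have hS : (PowerSeries.C (R := ℂ) (lam ^ 2) * (E * E) - 1) * (Bser lam + Bser (-lam))
      = PowerSeries.C (R := ℂ) 2 * PowerSeries.X := by
    have k1 := key lam hlam1
    have k2 := key (-lam) (fun h => hlam2 (by linear_combination -h))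
    have hfac : (PowerSeries.C (R := ℂ) (lam ^ 2) * (E * E) - 1)
        = -((PowerSeries.C (R := ℂ) lam * E - 1) * (PowerSeries.C (R := ℂ) (-lam) * E - 1)) := by
      push_cast [map_neg, map_pow]
      ring
    rw [hfac]
    have e1 : -((PowerSeries.C (R := ℂ) lam * E - 1) * (PowerSeries.C (R := ℂ) (-lam) * E - 1)) * Bser lam
        = -(PowerSeries.C (R := ℂ) (-lam) * E - 1) * PowerSeries.X := by
      rw [neg_mul, mul_right_comm, k1]; ring
    have e2 : -((PowerSeries.C (R := ℂ) lam * E - 1) * (PowerSeries.C (R := ℂ) (-lam) * E - 1)) * Bser (-lam)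
        = -(PowerSeries.C (R := ℂ) lam * E - 1) * PowerSeries.X := by
      rw [neg_mul, mul_assoc, k2]; ring
    rw [mul_add, e1, e2, map_neg, map_ofNat]
    ring
  have hne : (PowerSeries.C (R := ℂ) (lam ^ 2) * (E * E) - 1) ≠ 0 := by
    intro h
    have := congrArg (PowerSeries.constantCoeff (R := ℂ)) h
    simp [E, PowerSeries.constantCoeff_exp] at this
    exact hsq (by linear_combination this)
  exact mul_left_cancel₀ hne (hG.trans hS.symm)

lemma num_dup (lam : ℂ) (hlam1 : lam ≠ 1) (hlam2 : lam ≠ -1) (k : ℕ) :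
    2 ^ k * ABnum (lam ^ 2) k = ABnum lam k + ABnum (-lam) k := by
  have h := congrArg (PowerSeries.coeff (R := ℂ) k) (series_dup lam hlam1 hlam2)
  rw [PowerSeries.coeff_rescale, map_add] at h
  simp only [Bser, PowerSeries.coeff_mk] at h
  have h3 : (k.factorial : ℂ) ≠ 0 := Nat.cast_ne_zero.mpr k.factorial_ne_zero
  field_simp at h
  exact h

theorem apostol_bernoulli_duplication (lam : ℂ) (hlam1 : lam ≠ 1) (hlam2 : lam ≠ -1)
    (n : ℕ) (x : ℂ) :
    2 ^ n * ABpoly (lam ^ 2) n (x / 2) = ABpoly lam n x + ABpoly (-lam) n x := by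
  unfold ABpoly
  rw [Finset.mul_sum, ← Finset.sum_add_distrib]
  refine Finset.sum_congr rfl fun k hk => ?_
  have hk' : k ≤ n := Nat.lt_succ_iff.mp (Finset.mem_range.mp hk)
  have h2 : (2:ℂ) ^ n * ((x / 2) ^ (n - k)) = 2 ^ k * x ^ (n - k) := by
    rw [div_pow]
    rw [show n = k + (n - k) by omega, pow_add]
    field_simp
    rw [Nat.add_sub_cancel_left]
    ring
  calc 2 ^ n * ((n.choose k : ℂ) * ABnum (lam ^ 2) k * (x / 2) ^ (n - k))
      = (n.choose k : ℂ) * ABnum (lam ^ 2) k * (2 ^ n * (x / 2) ^ (n - k)) := by ring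
    _ = (n.choose k : ℂ) * (2 ^ k * ABnum (lam ^ 2) k) * x ^ (n - k) := by
        rw [h2]; ring
    _ = (n.choose k : ℂ) * (ABnum lam k + ABnum (-lam) k) * x ^ (n - k) := by
        rw [num_dup lam hlam1 hlam2 k]
    _ = _ := by ring
end
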